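/- arXiv:1012.2254 — 2 statements merged into one kernel-verified Lean document; each statement's English description precedes it below -/
import Mathlib

section
/- Let f be a non-negative, strictly increasing, convex function on [0,∞) with f(0)=0, and let A, B be PSD Hermitian matrices with A ≥ ‖B‖_∞ · I. Then for every k, λ_k^↓(f(A−B)) ≤ λ_k^↓(f(A) − f(B)). -/
open Matrix
open scoped ComplexOrder

/-- `f` applied to a matrix via the spectral decomposition (junk value `0` if
the matrix is not Hermitian). -/
noncomputable def matFun {n : ℕ} (f : ℝ → ℝ) (A : Matrix (Fin n) (Fin n) ℂ) :
    Matrix (Fin n) (Fin n) ℂ :=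
  if hA : A.IsHermitian then
    (hA.eigenvectorUnitary : Matrix (Fin n) (Fin n) ℂ) *
      Matrix.diagonal (fun i => (f (hA.eigenvalues i) : ℂ)) *
      (star hA.eigenvectorUnitary : Matrix (Fin n) (Fin n) ℂ)
  else 0

/-- The eigenvalues of a Hermitian matrix, sorted in non-increasing order
(junk value `0` if the matrix is not Hermitian). -/
noncomputable def eigsDesc {n : ℕ} (A : Matrix (Fin n) (Fin n) ℂ) : Fin n → ℝ :=
  if hA : A.IsHermitian then (fun k => hA.eigenvalues (Tuple.sort hA.eigenvalues (Fin.rev k)))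
  else 0

/-- The absolute value `|X| = (XᴴX)^{1/2}` of a matrix. -/
noncomputable def matAbs {n : ℕ} (X : Matrix (Fin n) (Fin n) ℂ) : Matrix (Fin n) (Fin n) ℂ :=
  (Matrix.posSemidef_conjTranspose_mul_self X).1.eigenvectorUnitary.1 *
    Matrix.diagonal ((↑) ∘ (√·) ∘ (Matrix.posSemidef_conjTranspose_mul_self X).1.eigenvalues) *
    (star (Matrix.posSemidef_conjTranspose_mul_self X).1.eigenvectorUnitary : Matrix (Fin n) (Fin n) ℂ)

/-- The singular values of `X`, sorted in non-increasing order. -/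
noncomputable def svalsDesc {n : ℕ} (X : Matrix (Fin n) (Fin n) ℂ) : Fin n → ℝ :=
  eigsDesc (matAbs X)

/-- Sum of the first `k` entries of a vector indexed by `Fin n`. -/
noncomputable def kSum {n : ℕ} (μ : Fin n → ℝ) (k : ℕ) : ℝ :=
  ∑ j ∈ Finset.univ.filter (fun j : Fin n => (j : ℕ) < k), μ j

/-- The operator norm: the largest singular value. -/
noncomputable def opNorm {n : ℕ} (X : Matrix (Fin n) (Fin n) ℂ) : ℝ :=
  ⨆ i, svalsDesc X i


section Aux

open Finset

/-! ### Auxiliary machinery -/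

lemma quad_eq' {n : ℕ} (U : Matrix (Fin n) (Fin n) ℂ) (ν : Fin n → ℝ) (v : Fin n → ℂ) :
    star v ⬝ᵥ ((U * diagonal (fun i => (ν i : ℂ)) * star U) *ᵥ v)
      = ((∑ i, ν i * Complex.normSq ((star U *ᵥ v) i) : ℝ) : ℂ) := by
  set c := star U *ᵥ v with hc
  have h1 : (U * diagonal (fun i => (ν i : ℂ)) * star U) *ᵥ v
      = U *ᵥ (diagonal (fun i => (ν i : ℂ)) *ᵥ c) := by
    rw [hc, mulVec_mulVec, mulVec_mulVec, Matrix.mul_assoc]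
  rw [h1, dotProduct_mulVec]
  have h2 : star v ᵥ* U = star c := by
    rw [hc, star_mulVec, Matrix.star_eq_conjTranspose, conjTranspose_conjTranspose]
  rw [h2]
  simp only [dotProduct, mulVec_diagonal, Pi.star_apply, Complex.ofReal_sum]
  congr 1
  ext i
  have h3 : (starRingEnd ℂ) (c i) * c i = (Complex.normSq (c i) : ℂ) := by
    rw [mul_comm, Complex.mul_conj]
  push_cast
  rw [show (starRingEnd ℂ) (c i) = star (c i) from rfl] at h3
  rw [← h3]; ring

lemma norm_eq' {n : ℕ} (U : Matrix (Fin n) (Fin n) ℂ) (hU : U * star U = 1) (v : Fin n → ℂ) :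
    star v ⬝ᵥ v = ((∑ i, Complex.normSq ((star U *ᵥ v) i) : ℝ) : ℂ) := by
  have := quad_eq' U (fun _ => (1 : ℝ)) v
  simp only [Complex.ofReal_one, diagonal_one, Matrix.mul_one, one_mul, hU] at this
  simpa using this

lemma normsq_dot' {n : ℕ} (v : Fin n → ℂ) :
    star v ⬝ᵥ v = ((∑ i, Complex.normSq (v i) : ℝ) : ℂ) := by
  simp only [dotProduct, Pi.star_apply, Complex.ofReal_sum]
  congr 1; ext i
  rw [show star (v i) = (starRingEnd ℂ) (v i) from rfl, mul_comm, Complex.mul_conj]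

lemma exists_ne_zero_constraints {n : ℕ} (W1 W2 : Matrix (Fin n) (Fin n) ℂ)
    (s t : Finset (Fin n)) (h : s.card + t.card < n) :
    ∃ v : Fin n → ℂ, v ≠ 0 ∧ (∀ i ∈ s, (W1 *ᵥ v) i = 0) ∧ (∀ i ∈ t, (W2 *ᵥ v) i = 0) := by
  let Φ : (Fin n → ℂ) →ₗ[ℂ] ((s → ℂ) × (t → ℂ)) :=
    LinearMap.prod
      ((LinearMap.funLeft ℂ ℂ (fun i : s => (i : Fin n))).comp (Matrix.mulVecLin W1))
      ((LinearMap.funLeft ℂ ℂ (fun i : t => (i : Fin n))).comp (Matrix.mulVecLin W2))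
  have hrank : Module.finrank ℂ ((s → ℂ) × (t → ℂ)) < Module.finrank ℂ (Fin n → ℂ) := by
    rw [Module.finrank_prod, Module.finrank_pi, Module.finrank_pi, Module.finrank_pi]
    simpa [Fintype.card_coe] using h
  have hni : ¬ Function.Injective Φ := fun hinj =>
    absurd (LinearMap.finrank_le_finrank_of_injective hinj) (not_le.2 hrank)
  rw [Function.not_injective_iff] at hni
  obtain ⟨x, y, hxy, hne⟩ := hni
  refine ⟨x - y, sub_ne_zero.2 hne, ?_, ?_⟩
  · intro i hi
    have := congrArg (fun p => p.1 ⟨i, hi⟩) hxy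
    simpa [Φ, mulVec_sub, sub_eq_zero] using this
  · intro i hi
    have := congrArg (fun p => p.2 ⟨i, hi⟩) hxy
    simpa [Φ, mulVec_sub, sub_eq_zero] using this

noncomputable def descPerm {n : ℕ} (μ : Fin n → ℝ) : Equiv.Perm (Fin n) :=
  Fin.revPerm.trans (Tuple.sort μ)

noncomputable def descSort {n : ℕ} (μ : Fin n → ℝ) : Fin n → ℝ :=
  fun k => μ (descPerm μ k)

lemma antitone_descSort {n : ℕ} (μ : Fin n → ℝ) : Antitone (descSort μ) := by
  intro a b hab
  exact Tuple.monotone_sort μ (Fin.rev_le_rev.2 hab)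

lemma descSort_comp {n : ℕ} {μ : Fin n → ℝ} {f : ℝ → ℝ} {s : Set ℝ}
    (hf : MonotoneOn f s) (hμ : ∀ i, μ i ∈ s) :
    descSort (fun i => f (μ i)) = fun k => f (descSort μ k) := by
  have h1 : Monotone ((fun i => f (μ i)) ∘ Tuple.sort μ) := by
    intro a b hab
    exact hf (hμ _) (hμ _) (Tuple.monotone_sort μ hab)
  have h2 := Tuple.comp_sort_eq_comp_iff_monotone.mpr h1
  funext k
  have := congrFun h2.symm (Fin.rev k)
  simpa [descSort, descPerm] using this

lemma ge_of_not_mem_topC {n : ℕ} (μ : Fin n → ℝ) (k i : Fin n)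
    (hi : i ∉ (Finset.Ioi k).image (descPerm μ)) : descSort μ k ≤ μ i := by
  set j := (descPerm μ).symm i with hj
  have hjk : j ≤ k := by
    by_contra hlt
    exact hi (Finset.mem_image.2 ⟨j, Finset.mem_Ioi.2 (not_le.1 hlt),
      ((descPerm μ).apply_symm_apply i)⟩)
  calc descSort μ k ≤ descSort μ j := antitone_descSort μ hjk
    _ = μ i := by rw [descSort]; exact congrArg μ ((descPerm μ).apply_symm_apply i)

lemma le_of_not_mem_botC {n : ℕ} (μ : Fin n → ℝ) (k i : Fin n)
    (hi : i ∉ (Finset.Iio k).image (descPerm μ)) : μ i ≤ descSort μ k := by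
  set j := (descPerm μ).symm i with hj
  have hjk : k ≤ j := by
    by_contra hlt
    exact hi (Finset.mem_image.2 ⟨j, Finset.mem_Iio.2 (not_le.1 hlt),
      ((descPerm μ).apply_symm_apply i)⟩)
  calc μ i = descSort μ j := by
        rw [descSort]; exact (congrArg μ ((descPerm μ).apply_symm_apply i)).symm
    _ ≤ descSort μ k := antitone_descSort μ hjk

lemma card_topC {n : ℕ} (μ : Fin n → ℝ) (k : Fin n) :
    ((Finset.Ioi k).image (descPerm μ)).card = n - 1 - k := by
  rw [Finset.card_image_of_injective _ (descPerm μ).injective, Fin.card_Ioi]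

lemma card_botC {n : ℕ} (μ : Fin n → ℝ) (k : Fin n) :
    ((Finset.Iio k).image (descPerm μ)).card = k := by
  rw [Finset.card_image_of_injective _ (descPerm μ).injective, Fin.card_Iio]

lemma sum_mul_ge {n : ℕ} (ν w : Fin n → ℝ) (hw : ∀ i, 0 ≤ w i) (c : ℝ)
    (h : ∀ i, w i ≠ 0 → c ≤ ν i) :
    c * (∑ i, w i) ≤ ∑ i, ν i * w i := by
  rw [Finset.mul_sum]
  refine Finset.sum_le_sum fun i _ => ?_
  rcases eq_or_ne (w i) 0 with h0 | h0
  · simp [h0]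
  · exact mul_le_mul_of_nonneg_right (h i h0) (hw i)

lemma sum_mul_le {n : ℕ} (ν w : Fin n → ℝ) (hw : ∀ i, 0 ≤ w i) (c : ℝ)
    (h : ∀ i, w i ≠ 0 → ν i ≤ c) :
    ∑ i, ν i * w i ≤ c * (∑ i, w i) := by
  rw [Finset.mul_sum]
  refine Finset.sum_le_sum fun i _ => ?_
  rcases eq_or_ne (w i) 0 with h0 | h0
  · simp [h0]
  · exact mul_le_mul_of_nonneg_right (h i h0) (hw i)

lemma cf_core {n : ℕ} (M U V : Matrix (Fin n) (Fin n) ℂ)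
    (hU : U * star U = 1) (hV : V * star V = 1) (ν ρ : Fin n → ℝ)
    (hMU : M = U * diagonal (fun i => (ν i : ℂ)) * star U)
    (hMV : M = V * diagonal (fun i => (ρ i : ℂ)) * star V)
    (k : Fin n) : descSort ν k ≤ descSort ρ k := by
  obtain ⟨v, hv, hc1, hc2⟩ := exists_ne_zero_constraints (star U) (star V)
    ((Finset.Ioi k).image (descPerm ν)) ((Finset.Iio k).image (descPerm ρ))
    (by rw [card_topC, card_botC]; omega)
  set c := star U *ᵥ v with hc
  set d := star V *ᵥ v with hd
  have hQ : (∑ i, ν i * Complex.normSq (c i)) = (∑ i, ρ i * Complex.normSq (d i)) := by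
    have e1 := quad_eq' U ν v
    have e2 := quad_eq' V ρ v
    rw [← hMU] at e1; rw [← hMV] at e2
    exact_mod_cast e1.symm.trans e2
  have hN1 : (∑ i, Complex.normSq (c i)) = (∑ i, Complex.normSq (v i)) := by
    have := (norm_eq' U hU v).symm.trans (normsq_dot' v)
    exact_mod_cast this
  have hN2 : (∑ i, Complex.normSq (d i)) = (∑ i, Complex.normSq (v i)) := by
    have := (norm_eq' V hV v).symm.trans (normsq_dot' v)
    exact_mod_cast this
  have hNpos : 0 < ∑ i, Complex.normSq (v i) := by
    obtain ⟨i, hi⟩ := Function.ne_iff.1 hv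
    exact Finset.sum_pos' (fun j _ => Complex.normSq_nonneg _)
      ⟨i, Finset.mem_univ i, by simpa using Complex.normSq_pos.2 hi⟩
  have h1 : descSort ν k * (∑ i, Complex.normSq (v i)) ≤ ∑ i, ν i * Complex.normSq (c i) := by
    rw [← hN1]
    refine sum_mul_ge _ _ (fun i => Complex.normSq_nonneg _) _ fun i hi => ?_
    refine ge_of_not_mem_topC ν k i fun hmem => ?_
    exact hi (by simpa using congrArg Complex.normSq (hc1 i hmem))
  have h2 : ∑ i, ρ i * Complex.normSq (d i) ≤ descSort ρ k * (∑ i, Complex.normSq (v i)) := by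
    rw [← hN2]
    refine sum_mul_le _ _ (fun i => Complex.normSq_nonneg _) _ fun i hi => ?_
    refine le_of_not_mem_botC ρ k i fun hmem => ?_
    exact hi (by simpa using congrArg Complex.normSq (hc2 i hmem))
  have := h1.trans (hQ.le.trans h2)
  exact le_of_mul_le_mul_right (by linarith) hNpos

lemma superadd {f : ℝ → ℝ} (hfconv : ConvexOn ℝ (Set.Ici (0 : ℝ)) f) (hf00 : f 0 = 0)
    {x y : ℝ} (hx : 0 ≤ x) (hy : 0 ≤ y) : f x + f y ≤ f (x + y) := by
  rcases eq_or_lt_of_le (add_nonneg hx hy) with hs | hs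
  · have hx0 : x = 0 := by linarith
    have hy0 : y = 0 := by linarith
    simp [hx0, hy0, hf00]
  · set s := x + y with hsdef
    have key : ∀ z : ℝ, 0 ≤ z → z ≤ s → f z ≤ (z / s) * f s := by
      intro z hz hzs
      have hsum : z / s + (s - z) / s = 1 := by
        rw [← add_div, add_sub_cancel, div_self hs.ne']
      have := hfconv.2 (Set.mem_Ici.2 (le_of_lt hs)) (Set.mem_Ici.2 (le_refl (0:ℝ)))
        (div_nonneg hz hs.le) (div_nonneg (by linarith : 0 ≤ s - z) hs.le) hsum
      simp only [smul_eq_mul, mul_zero, add_zero, hf00] at this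
      rwa [div_mul_cancel₀ _ hs.ne'] at this
    have h1 := key x hx (by linarith)
    have h2 := key y hy (by linarith)
    have : x / s * f s + y / s * f s = f s := by
      rw [← add_mul, ← add_div, hsdef, div_self hs.ne', one_mul]
    nlinarith [h1, h2]

lemma jensen_div {n : ℕ} {f : ℝ → ℝ} (hfconv : ConvexOn ℝ (Set.Ici (0 : ℝ)) f)
    (x w : Fin n → ℝ) (hw : ∀ i, 0 ≤ w i) {N : ℝ} (hN : 0 < N)
    (hsum : (∑ i, w i) = N) (hx : ∀ i, 0 ≤ x i) :
    f ((∑ i, x i * w i) / N) ≤ (∑ i, f (x i) * w i) / N := by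
  have h := hfconv.map_sum_le (t := Finset.univ) (w := fun i => w i / N) (p := x)
    (fun i _ => div_nonneg (hw i) hN.le)
    (by rw [← Finset.sum_div, hsum, div_self hN.ne'])
    (fun i _ => hx i)
  simp only [smul_eq_mul] at h
  have e1 : (∑ i, w i / N * x i) = (∑ i, x i * w i) / N := by
    rw [Finset.sum_div]; congr 1; ext i; ring
  have e2 : (∑ i, w i / N * f (x i)) = (∑ i, f (x i) * w i) / N := by
    rw [Finset.sum_div]; congr 1; ext i; ring
  rw [e1, e2] at h
  exact h

lemma isHermitian_UDU {n : ℕ} (U : Matrix (Fin n) (Fin n) ℂ) (ν : Fin n → ℝ) :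
    (U * diagonal (fun i => (ν i : ℂ)) * star U).IsHermitian := by
  rw [Matrix.star_eq_conjTranspose]
  exact isHermitian_mul_mul_conjTranspose U
    (isHermitian_diagonal_of_self_adjoint _
      (funext fun i => by simp [Pi.star_apply, Complex.conj_ofReal]))

lemma spectral_decomp {n : ℕ} {M : Matrix (Fin n) (Fin n) ℂ} (hM : M.IsHermitian) :
    M = (hM.eigenvectorUnitary : Matrix (Fin n) (Fin n) ℂ)
        * diagonal (fun i => ((hM.eigenvalues i : ℝ) : ℂ))
        * star (hM.eigenvectorUnitary : Matrix (Fin n) (Fin n) ℂ) :=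
  hM.spectral_theorem

lemma unitary_mul_star {n : ℕ} {M : Matrix (Fin n) (Fin n) ℂ} (hM : M.IsHermitian) :
    (hM.eigenvectorUnitary : Matrix (Fin n) (Fin n) ℂ)
      * star (hM.eigenvectorUnitary : Matrix (Fin n) (Fin n) ℂ) = 1 :=
  (Matrix.mem_unitaryGroup_iff).mp hM.eigenvectorUnitary.2

lemma eigsDesc_herm {n : ℕ} {M : Matrix (Fin n) (Fin n) ℂ} (hM : M.IsHermitian) :
    eigsDesc M = descSort hM.eigenvalues := by
  rw [eigsDesc, dif_pos hM]; rfl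

lemma eigsDesc_eq_descSort {n : ℕ} {M U : Matrix (Fin n) (Fin n) ℂ} {ν : Fin n → ℝ}
    (hM : M.IsHermitian) (hU : U * star U = 1)
    (hdec : M = U * diagonal (fun i => (ν i : ℂ)) * star U) (k : Fin n) :
    eigsDesc M k = descSort ν k := by
  rw [eigsDesc_herm hM]
  exact le_antisymm
    (cf_core M (hM.eigenvectorUnitary : Matrix (Fin n) (Fin n) ℂ) U
      (unitary_mul_star hM) hU _ ν (spectral_decomp hM) hdec k)
    (cf_core M U (hM.eigenvectorUnitary : Matrix (Fin n) (Fin n) ℂ)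
      hU (unitary_mul_star hM) ν _ hdec (spectral_decomp hM) k)

lemma matFun_herm {n : ℕ} (f : ℝ → ℝ) {M : Matrix (Fin n) (Fin n) ℂ} (hM : M.IsHermitian) :
    matFun f M = (hM.eigenvectorUnitary : Matrix (Fin n) (Fin n) ℂ)
        * diagonal (fun i => (f (hM.eigenvalues i) : ℂ))
        * star (hM.eigenvectorUnitary : Matrix (Fin n) (Fin n) ℂ) := by
  rw [matFun, dif_pos hM]

open scoped MatrixOrder in
lemma matAbs_of_psd {n : ℕ} {B : Matrix (Fin n) (Fin n) ℂ} (hB : B.PosSemidef) :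
    matAbs B = B := by
  have h1 : matAbs B = cfc Real.sqrt (Bᴴ * B) := by
    rw [(posSemidef_conjTranspose_mul_self B).1.cfc_eq, IsHermitian.cfc, Unitary.conjStarAlgAut_apply,
      matAbs]
    rfl
  rw [h1, hB.1.eq, ← cfcₙ_eq_cfc (hf0 := by simp), ← CFC.sqrt_eq_real_sqrt (B * B)
    (by simpa [hB.1.eq] using (posSemidef_conjTranspose_mul_self B).nonneg)]
  exact CFC.sqrt_mul_self B hB.nonneg

end Aux

set_option maxHeartbeats 2000000 in
/-- For a non-negative strictly increasing convex `f` on `[0,∞)` with `f 0 = 0`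
and PSD `A, B` with `A ≥ ‖B‖_∞ · I`, one has
`λ_k^↓(f(A−B)) ≤ λ_k^↓(f(A) − f(B))` for every `k`. -/
theorem eig_convex_sub {n : ℕ} (f : ℝ → ℝ)
    (hf0 : ∀ x ∈ Set.Ici (0 : ℝ), 0 ≤ f x)
    (hfmono : StrictMonoOn f (Set.Ici (0 : ℝ)))
    (hfconv : ConvexOn ℝ (Set.Ici (0 : ℝ)) f) (hf00 : f 0 = 0)
    (A B : Matrix (Fin n) (Fin n) ℂ) (hA : A.PosSemidef) (hB : B.PosSemidef)
    (hAB : (A - (opNorm B : ℂ) • 1).PosSemidef) (k : Fin n) :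
    eigsDesc (matFun f (A - B)) k ≤ eigsDesc (matFun f A - matFun f B) k := by
  classical
  have hAh : A.IsHermitian := hA.1
  have hBh : B.IsHermitian := hB.1
  have hCh : (A - B).IsHermitian := hAh.sub hBh
  set a : Fin n → ℝ := hAh.eigenvalues with ha
  set bm : Fin n → ℝ := hBh.eigenvalues with hbmdef
  set μ : Fin n → ℝ := hCh.eigenvalues with hmu
  set Ua := (hAh.eigenvectorUnitary : Matrix (Fin n) (Fin n) ℂ) with hUadef
  set Ub := (hBh.eigenvectorUnitary : Matrix (Fin n) (Fin n) ℂ) with hUbdef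
  set Uc := (hCh.eigenvectorUnitary : Matrix (Fin n) (Fin n) ℂ) with hUcdef
  set b : ℝ := opNorm B with hbdef
  -- |B| = B
  have habs : matAbs B = B :=
    matAbs_of_psd hB
  -- eigenvalue bounds for B
  have hbm0 : ∀ i, 0 ≤ bm i := hB.eigenvalues_nonneg
  have ha0 : ∀ i, 0 ≤ a i := hA.eigenvalues_nonneg
  have hbm_le : ∀ i, bm i ≤ b := by
    intro i
    have h1 : eigsDesc B ((descPerm bm).symm i) = bm i := by
      rw [eigsDesc_herm hBh, descSort]
      exact congrArg bm ((descPerm bm).apply_symm_apply i)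
    have h2 : eigsDesc B ((descPerm bm).symm i) ≤ ⨆ j, eigsDesc B j :=
      le_ciSup (Set.Finite.bddAbove (Set.finite_range _)) _
    rw [h1] at h2
    simpa only [hbdef, opNorm, svalsDesc, habs] using h2
  have hb0 : 0 ≤ b := (hbm0 k).trans (hbm_le k)
  -- quadratic forms
  have qA : ∀ x : Fin n → ℂ, star x ⬝ᵥ (A *ᵥ x)
      = ((∑ i, a i * Complex.normSq ((star Ua *ᵥ x) i) : ℝ) : ℂ) := by
    intro x
    conv_lhs => rw [spectral_decomp hAh]
    exact quad_eq' Ua a x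
  have qB : ∀ x : Fin n → ℂ, star x ⬝ᵥ (B *ᵥ x)
      = ((∑ i, bm i * Complex.normSq ((star Ub *ᵥ x) i) : ℝ) : ℂ) := by
    intro x
    conv_lhs => rw [spectral_decomp hBh]
    exact quad_eq' Ub bm x
  have hqsum : ∀ x : Fin n → ℂ, (∑ i, Complex.normSq ((star Ub *ᵥ x) i))
      = ∑ i, Complex.normSq (x i) := by
    intro x
    have := (norm_eq' Ub (unitary_mul_star hBh) x).symm.trans (normsq_dot' x)
    exact_mod_cast this
  have hQB_le : ∀ x : Fin n → ℂ, (∑ i, bm i * Complex.normSq ((star Ub *ᵥ x) i))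
      ≤ b * ∑ i, Complex.normSq (x i) := by
    intro x
    rw [← hqsum x]
    exact sum_mul_le _ _ (fun i => Complex.normSq_nonneg _) b (fun i _ => hbm_le i)
  have hQA_ge : ∀ x : Fin n → ℂ, b * (∑ i, Complex.normSq (x i))
      ≤ ∑ i, a i * Complex.normSq ((star Ua *ᵥ x) i) := by
    intro x
    have h0 := hAB.dotProduct_mulVec_nonneg x
    have e : star x ⬝ᵥ ((A - (b : ℂ) • 1) *ᵥ x)
        = (((∑ i, a i * Complex.normSq ((star Ua *ᵥ x) i))
            - b * (∑ i, Complex.normSq (x i)) : ℝ) : ℂ) := by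
      rw [sub_mulVec, smul_mulVec, one_mulVec, dotProduct_sub, dotProduct_smul,
        qA x, normsq_dot' x]
      simp only [smul_eq_mul]
      push_cast
      ring
    rw [e] at h0
    have := Complex.zero_le_real.mp h0
    linarith
  -- A - B is PSD
  have hCpsd : (A - B).PosSemidef := by
    refine PosSemidef.of_dotProduct_mulVec_nonneg hCh fun x => ?_
    rw [sub_mulVec, dotProduct_sub, qA x, qB x, ← Complex.ofReal_sub]
    rw [Complex.zero_le_real]
    have := (hQB_le x).trans (hQA_ge x)
    linarith
  have hμ0 : ∀ i, 0 ≤ μ i := hCpsd.eigenvalues_nonneg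
  -- LHS
  have hfC : matFun f (A - B) = Uc * diagonal (fun i => (f (μ i) : ℂ)) * star Uc :=
    matFun_herm f hCh
  have hfCh : (matFun f (A - B)).IsHermitian := by
    rw [hfC]; exact isHermitian_UDU _ _
  have hLHS : eigsDesc (matFun f (A - B)) k = f (descSort μ k) := by
    rw [eigsDesc_eq_descSort hfCh (unitary_mul_star hCh) hfC k]
    rw [descSort_comp hfmono.monotoneOn hμ0]
  set t : ℝ := descSort μ k with htdef
  have ht0 : 0 ≤ t := hμ0 _
  -- RHS matrix
  set M : Matrix (Fin n) (Fin n) ℂ := matFun f A - matFun f B with hMdef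
  have hfA : matFun f A = Ua * diagonal (fun i => (f (a i) : ℂ)) * star Ua := matFun_herm f hAh
  have hfB : matFun f B = Ub * diagonal (fun i => (f (bm i) : ℂ)) * star Ub := matFun_herm f hBh
  have hMh : M.IsHermitian := by
    rw [hMdef, hfA, hfB]
    exact (isHermitian_UDU _ _).sub (isHermitian_UDU _ _)
  set ρ : Fin n → ℝ := hMh.eigenvalues with hrho
  set V := (hMh.eigenvectorUnitary : Matrix (Fin n) (Fin n) ℂ) with hVdef
  have hRHS : eigsDesc M k = descSort ρ k := by rw [eigsDesc_herm hMh]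
  -- test vector
  obtain ⟨v, hv, hc1, hc2⟩ := exists_ne_zero_constraints (star Uc) (star V)
    ((Finset.Ioi k).image (descPerm μ)) ((Finset.Iio k).image (descPerm ρ))
    (by rw [card_topC, card_botC]; omega)
  set N : ℝ := ∑ i, Complex.normSq (v i) with hNdef
  have hN : 0 < N := by
    obtain ⟨i, hi⟩ := Function.ne_iff.1 hv
    exact Finset.sum_pos' (fun j _ => Complex.normSq_nonneg _)
      ⟨i, Finset.mem_univ i, by simpa using Complex.normSq_pos.2 hi⟩
  set p : Fin n → ℝ := fun i => Complex.normSq ((star Ua *ᵥ v) i) with hpdef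
  set q : Fin n → ℝ := fun i => Complex.normSq ((star Ub *ᵥ v) i) with hqdef
  set w : Fin n → ℝ := fun i => Complex.normSq ((star Uc *ᵥ v) i) with hwdef
  set r : Fin n → ℝ := fun i => Complex.normSq ((star V *ᵥ v) i) with hrdef
  have hp0 : ∀ i, 0 ≤ p i := fun i => Complex.normSq_nonneg _
  have hq0 : ∀ i, 0 ≤ q i := fun i => Complex.normSq_nonneg _
  have hsump : (∑ i, p i) = N := by
    have := (norm_eq' Ua (unitary_mul_star hAh) v).symm.trans (normsq_dot' v)
    exact_mod_cast this
  have hsumq : (∑ i, q i) = N := hqsum v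
  have hsumw : (∑ i, w i) = N := by
    have := (norm_eq' Uc (unitary_mul_star hCh) v).symm.trans (normsq_dot' v)
    exact_mod_cast this
  have hsumr : (∑ i, r i) = N := by
    have := (norm_eq' V (unitary_mul_star hMh) v).symm.trans (normsq_dot' v)
    exact_mod_cast this
  set QA : ℝ := ∑ i, a i * p i with hQAdef
  set QB : ℝ := ∑ i, bm i * q i with hQBdef
  set QC : ℝ := ∑ i, μ i * w i with hQCdef
  set QfA : ℝ := ∑ i, f (a i) * p i with hQfAdef
  set QfB : ℝ := ∑ i, f (bm i) * q i with hQfBdef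
  set QM : ℝ := ∑ i, ρ i * r i with hQMdef
  -- identities
  have idC : QC = QA - QB := by
    have h1 : star v ⬝ᵥ ((A - B) *ᵥ v) = ((QC : ℝ) : ℂ) := by
      conv_lhs => rw [spectral_decomp hCh]
      exact quad_eq' Uc μ v
    have h2 : star v ⬝ᵥ ((A - B) *ᵥ v) = ((QA - QB : ℝ) : ℂ) := by
      rw [sub_mulVec, dotProduct_sub, qA v, qB v, ← Complex.ofReal_sub]
    exact_mod_cast h1.symm.trans h2
  have idM : QM = QfA - QfB := by
    have h1 : star v ⬝ᵥ (M *ᵥ v) = ((QM : ℝ) : ℂ) := by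
      conv_lhs => rw [spectral_decomp hMh]
      exact quad_eq' V ρ v
    have h2 : star v ⬝ᵥ (M *ᵥ v) = ((QfA - QfB : ℝ) : ℂ) := by
      rw [hMdef, sub_mulVec, dotProduct_sub, Complex.ofReal_sub]
      congr 1
      · conv_lhs => rw [hfA]
        exact quad_eq' Ua (fun i => f (a i)) v
      · conv_lhs => rw [hfB]
        exact quad_eq' Ub (fun i => f (bm i)) v
    exact_mod_cast h1.symm.trans h2
  -- constraint bounds
  have hQMle : QM ≤ descSort ρ k * N := by
    rw [← hsumr]
    refine sum_mul_le _ _ (fun i => Complex.normSq_nonneg _) _ fun i hi => ?_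
    refine le_of_not_mem_botC ρ k i fun hmem => ?_
    exact hi (by simpa [hrdef] using congrArg Complex.normSq (hc2 i hmem))
  have hQCge : t * N ≤ QC := by
    rw [← hsumw]
    refine sum_mul_ge _ _ (fun i => Complex.normSq_nonneg _) _ fun i hi => ?_
    refine ge_of_not_mem_topC μ k i fun hmem => ?_
    exact hi (by simpa [hwdef] using congrArg Complex.normSq (hc1 i hmem))
  have hQAge : b * N ≤ QA := by
    have := hQA_ge v
    rw [hNdef]
    exact this
  have hQBle : QB ≤ b * N := hQB_le v
  have hQB0 : 0 ≤ QB := Finset.sum_nonneg fun i _ => mul_nonneg (hbm0 i) (hq0 i)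
  -- scalar part
  set α : ℝ := QA / N with halpha
  set β : ℝ := QB / N with hbeta
  have hαb : b ≤ α := (le_div_iff₀ hN).2 (by linarith)
  have hβb : β ≤ b := (div_le_iff₀ hN).2 (by linarith)
  have hβ0 : 0 ≤ β := div_nonneg hQB0 hN.le
  have jensenA : f α ≤ QfA / N := by
    have := jensen_div hfconv a p hp0 hN hsump ha0
    rwa [← hQAdef, ← hQfAdef, ← halpha] at this
  have hper : ∀ i, f (bm i) ≤ f α - f (α - bm i) := by
    intro i
    have hs := superadd hfconv hf00 (hbm0 i) (sub_nonneg.2 ((hbm_le i).trans hαb))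
    have he : bm i + (α - bm i) = α := by ring
    rw [he] at hs
    linarith
  have jensenB : f (α - β) ≤ (∑ i, f (α - bm i) * q i) / N := by
    have := jensen_div hfconv (fun i => α - bm i) q hq0 hN hsumq
      (fun i => sub_nonneg.2 ((hbm_le i).trans hαb))
    have he : (∑ i, (α - bm i) * q i) = α * N - QB := by
      have e1 : (∑ i, (α - bm i) * q i) = α * (∑ i, q i) - ∑ i, bm i * q i := by
        rw [Finset.mul_sum, ← Finset.sum_sub_distrib]
        exact Finset.sum_congr rfl fun i _ => by ring
      rw [e1, hsumq, ← hQBdef]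
    rw [he] at this
    have he2 : (α * N - QB) / N = α - β := by
      rw [hbeta, sub_div]
      congr 1
      field_simp
    rwa [he2] at this
  have hQfB_le : QfB / N ≤ f α - f (α - β) := by
    have h1 : QfB ≤ ∑ i, (f α - f (α - bm i)) * q i := by
      rw [hQfBdef]
      exact Finset.sum_le_sum fun i _ => mul_le_mul_of_nonneg_right (hper i) (hq0 i)
    have h2 : (∑ i, (f α - f (α - bm i)) * q i) = f α * N - ∑ i, f (α - bm i) * q i := by
      rw [← hsumq, Finset.mul_sum, ← Finset.sum_sub_distrib]
      exact Finset.sum_congr rfl fun i _ => by ring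
    have h4 : f (α - β) * N ≤ ∑ i, f (α - bm i) * q i := (le_div_iff₀ hN).1 jensenB
    have h5 : QfB ≤ (f α - f (α - β)) * N := by rw [h2] at h1; linarith
    exact (div_le_iff₀ hN).2 h5
  -- conclude
  have hQfA_ge : f α * N ≤ QfA := (le_div_iff₀ hN).1 jensenA
  have hQfB_le' : QfB ≤ (f α - f (α - β)) * N := (div_le_iff₀ hN).1 hQfB_le
  have hQMge : f (α - β) * N ≤ QM := by rw [idM]; nlinarith [hQfA_ge, hQfB_le']
  have hαβ : t ≤ α - β := by
    have h6 : α - β = QC / N := by rw [halpha, hbeta, idC, sub_div]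
    rw [h6]
    exact (le_div_iff₀ hN).2 hQCge
  have hft : f t ≤ f (α - β) :=
    hfmono.monotoneOn (Set.mem_Ici.2 ht0) (Set.mem_Ici.2 (ht0.trans hαβ)) hαβ
  have hfin : f (α - β) ≤ descSort ρ k :=
    le_of_mul_le_mul_right (by linarith [hQMge.trans hQMle]) hN
  rw [hLHS, hRHS]
  exact hft.trans hfin
end

section
/- Let g be a non-negative increasing concave function on [0,∞) with g(0)=0, g(1)=1 (so g(x) ≥ x for 0 ≤ x ≤ 1), and suppose the one-sided derivative satisfies g'(x) ≤ 1 for all x ≥ 0. Then for PSD matrices B, C with ‖B‖_∞ ≤ 1, and every k: λ_k^↓(g(C+B) − B) ≤ g(λ_k^↓(C)). -/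
open Matrix
open scoped ComplexOrder

section Helpers

lemma tangent_bound {g : ℝ → ℝ}
    (hgconc : ConcaveOn ℝ (Set.Ici (0 : ℝ)) g)
    {x₀ d : ℝ} (hx₀ : x₀ ∈ Set.Ici (0:ℝ))
    (hd : Filter.Tendsto (fun t => (g (x₀ + t) - g x₀) / t) (nhdsWithin 0 (Set.Ioi 0)) (nhds d))
    {x : ℝ} (hx : x ∈ Set.Ici (0:ℝ)) : g x ≤ g x₀ + d * (x - x₀) := by
  simp only [Set.mem_Ici] at hx hx₀
  rcases lt_trichotomy x x₀ with h | h | h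
  · have key : ∀ t : ℝ, 0 < t → (g (x₀ + t) - g x₀) / t ≤ (g x₀ - g x) / (x₀ - x) := by
      intro t ht
      have := hgconc.slope_anti_adjacent (x := x) (y := x₀) (z := x₀ + t)
        (Set.mem_Ici.2 hx) (Set.mem_Ici.2 (by linarith)) h (by linarith)
      simpa using this
    have hdle : d ≤ (g x₀ - g x) / (x₀ - x) :=
      le_of_tendsto hd (by filter_upwards [self_mem_nhdsWithin] with t ht using key t ht)
    have hpos : 0 < x₀ - x := by linarith
    rw [le_div_iff₀ hpos] at hdle
    nlinarith
  · simp [h]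
  · have hpos : 0 < x - x₀ := by linarith
    have key : ∀ t ∈ Set.Ioo (0:ℝ) (x - x₀),
        (g x - g x₀) / (x - x₀) ≤ (g (x₀ + t) - g x₀) / t := by
      intro t ⟨ht0, htx⟩
      have hadj := hgconc.slope_anti_adjacent (x := x₀) (y := x₀ + t) (z := x)
        (Set.mem_Ici.2 hx₀) (Set.mem_Ici.2 hx) (by linarith) (by linarith)
      -- hadj : (g x - g (x₀+t))/(x - (x₀+t)) ≤ (g (x₀+t) - g x₀)/(x₀+t - x₀)
      set S := (g (x₀ + t) - g x₀) / (x₀ + t - x₀) with hS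
      have h1 : g x - g (x₀ + t) ≤ S * (x - (x₀ + t)) := by
        rw [div_le_iff₀ (by linarith)] at hadj; linarith
      have h2 : g (x₀ + t) - g x₀ = S * t := by
        rw [hS, show x₀ + t - x₀ = t by ring, div_mul_cancel₀ _ ht0.ne']
      have h3 : g x - g x₀ ≤ S * (x - x₀) := by nlinarith
      rw [div_le_div_iff₀ hpos ht0]
      have hSt : S = (g (x₀ + t) - g x₀) / t := by rw [hS]; ring_nf
      nlinarith [h3, ht0, (div_le_iff₀ ht0).mp (le_of_eq hSt.symm)]
    have hdge : (g x - g x₀) / (x - x₀) ≤ d := by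
      refine ge_of_tendsto hd ?_
      filter_upwards [Ioo_mem_nhdsGT_of_mem (Set.mem_Ico.2 ⟨le_refl 0, hpos⟩)] with t ht
        using key t ht
    rw [div_le_iff₀ hpos] at hdge
    linarith

/-- the span of the columns of `U` indexed by `I`. -/
noncomputable def colSpan {n : ℕ} (U : Matrix (Fin n) (Fin n) ℂ) (I : Finset (Fin n)) :
    Submodule ℂ (Fin n → ℂ) :=
  Submodule.map (Matrix.mulVecLin U)
    (Submodule.span ℂ ((fun i => Pi.single i (1:ℂ)) '' (I : Set (Fin n))))

lemma single_linearIndependent {n : ℕ} :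
    LinearIndependent ℂ (fun i : Fin n => Pi.single i (1:ℂ)) := by
  have h := (Pi.basisFun ℂ (Fin n)).linearIndependent
  have he : ⇑(Pi.basisFun ℂ (Fin n)) = fun i : Fin n => Pi.single i (1:ℂ) := by
    ext i j
    simp [Pi.basisFun_apply]
  rwa [he] at h

lemma finrank_colSpan {n : ℕ} {U : Matrix (Fin n) (Fin n) ℂ}
    (hU : U ∈ Matrix.unitaryGroup (Fin n) ℂ) (I : Finset (Fin n)) :
    Module.finrank ℂ (colSpan U I) = I.card := by
  have h1 : star U * U = 1 := Matrix.mem_unitaryGroup_iff'.mp hU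
  have h2 : U * star U = 1 := Matrix.mem_unitaryGroup_iff.mp hU
  let e : (Fin n → ℂ) ≃ₗ[ℂ] (Fin n → ℂ) :=
    LinearEquiv.ofLinear (Matrix.mulVecLin U) (Matrix.mulVecLin (star U))
      (by rw [← Matrix.mulVecLin_mul, h2, Matrix.mulVecLin_one])
      (by rw [← Matrix.mulVecLin_mul, h1, Matrix.mulVecLin_one])
  have hmap : colSpan U I = Submodule.map (e : (Fin n → ℂ) →ₗ[ℂ] (Fin n → ℂ))
      (Submodule.span ℂ ((fun i => Pi.single i (1:ℂ)) '' (I : Set (Fin n)))) := rfl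
  rw [hmap, LinearEquiv.finrank_map_eq]
  rw [show ((fun i => Pi.single i (1:ℂ)) '' (I : Set (Fin n)))
      = Set.range ((fun i => Pi.single i (1:ℂ)) ∘ (Subtype.val : {x // x ∈ (I : Set (Fin n))} → Fin n)) by
    rw [Set.range_comp, Subtype.range_coe]]
  rw [finrank_span_eq_card (single_linearIndependent.comp _ Subtype.val_injective)]
  simp

/-- Submodule of vectors supported in `I`. -/
noncomputable def suppSub {n : ℕ} (I : Finset (Fin n)) : Submodule ℂ (Fin n → ℂ) where
  carrier := {y | ∀ i ∉ I, y i = 0}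
  add_mem' := by intro a b ha hb i hi; simp [ha i hi, hb i hi]
  zero_mem' := by intro i _; rfl
  smul_mem' := by intro c a ha i hi; simp [ha i hi]

lemma mem_colSpan {n : ℕ} {U : Matrix (Fin n) (Fin n) ℂ} {I : Finset (Fin n)}
    {x : Fin n → ℂ} (hx : x ∈ colSpan U I) :
    ∃ a : Fin n → ℂ, (∀ i ∉ I, a i = 0) ∧ x = U *ᵥ a := by
  obtain ⟨a, ha, rfl⟩ := hx
  have hle : Submodule.span ℂ ((fun i => Pi.single i (1:ℂ)) '' (I : Set (Fin n))) ≤ suppSub I := by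
    rw [Submodule.span_le]
    rintro _ ⟨j, hj, rfl⟩ i hi
    have : j ≠ i := fun h => hi (h ▸ hj)
    simp [Pi.single_apply, this.symm]
  exact ⟨a, hle ha, rfl⟩

lemma unitary_dot {n : ℕ} {U : Matrix (Fin n) (Fin n) ℂ} (hU : U ∈ Matrix.unitaryGroup (Fin n) ℂ)
    (a b : Fin n → ℂ) : star (U *ᵥ a) ⬝ᵥ (U *ᵥ b) = star a ⬝ᵥ b := by
  rw [Matrix.star_mulVec, Matrix.dotProduct_mulVec, Matrix.vecMul_vecMul,
    ← Matrix.star_eq_conjTranspose, (Matrix.mem_unitaryGroup_iff'.mp hU), Matrix.vecMul_one]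

lemma quad_form {n : ℕ} {M : Matrix (Fin n) (Fin n) ℂ} (hM : M.IsHermitian)
    (a : Fin n → ℂ) :
    star ((hM.eigenvectorUnitary : Matrix (Fin n) (Fin n) ℂ) *ᵥ a) ⬝ᵥ
      (M *ᵥ ((hM.eigenvectorUnitary : Matrix (Fin n) (Fin n) ℂ) *ᵥ a)) =
      ((∑ i, hM.eigenvalues i * Complex.normSq (a i) : ℝ) : ℂ) := by
  set U := (hM.eigenvectorUnitary : Matrix (Fin n) (Fin n) ℂ) with hUdef
  have h1 : star U * U = 1 := Matrix.mem_unitaryGroup_iff'.mp hM.eigenvectorUnitary.2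
  have hMx : M *ᵥ (U *ᵥ a) =
      U *ᵥ (Matrix.diagonal (RCLike.ofReal ∘ hM.eigenvalues) *ᵥ a) := by
    conv_lhs => rw [hM.spectral_theorem]; simp only [Unitary.conjStarAlgAut_apply, Unitary.coe_star]
    rw [← hUdef, Matrix.mulVec_mulVec, Matrix.mul_assoc (U * _), h1, Matrix.mul_one,
      ← Matrix.mulVec_mulVec]
  rw [hMx, unitary_dot hM.eigenvectorUnitary.2]
  simp [dotProduct, Matrix.mulVec_diagonal, Complex.normSq_eq_conj_mul_self]
  push_cast
  refine Finset.sum_congr rfl fun i _ => ?_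
  ring

lemma norm_form {n : ℕ} {U : Matrix (Fin n) (Fin n) ℂ} (hU : U ∈ Matrix.unitaryGroup (Fin n) ℂ)
    (a : Fin n → ℂ) :
    star (U *ᵥ a) ⬝ᵥ (U *ᵥ a) = ((∑ i, Complex.normSq (a i) : ℝ) : ℂ) := by
  rw [unitary_dot hU]
  simp [dotProduct, Complex.normSq_eq_conj_mul_self]

lemma weyl_key {n : ℕ} {A C : Matrix (Fin n) (Fin n) ℂ} (hA : A.IsHermitian) (hC : C.IsHermitian)
    {d c : ℝ} (hd : 0 ≤ d)
    (hPSD : ((d:ℂ) • C + (c:ℂ) • 1 - A).PosSemidef) (k : Fin n) :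
    eigsDesc A k ≤ d * eigsDesc C k + c := by
  classical
  set σ := Tuple.sort hA.eigenvalues with hσ
  set τ := Tuple.sort hC.eigenvalues with hτ
  set IA : Finset (Fin n) := Finset.image σ (Finset.Ici (Fin.rev k)) with hIA
  set IC : Finset (Fin n) := Finset.image τ (Finset.Iic (Fin.rev k)) with hIC
  have hcardA : IA.card = (k : ℕ) + 1 := by
    rw [hIA, Finset.card_image_of_injective _ σ.injective, Fin.card_Ici, Fin.val_rev]
    omega
  have hcardC : IC.card = n - (k : ℕ) := by
    rw [hIC, Finset.card_image_of_injective _ τ.injective, Fin.card_Iic, Fin.val_rev]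
    have := k.isLt
    omega
  set U := (hA.eigenvectorUnitary : Matrix (Fin n) (Fin n) ℂ) with hU
  set V := (hC.eigenvectorUnitary : Matrix (Fin n) (Fin n) ℂ) with hV
  set SA := colSpan U IA with hSA
  set SC := colSpan V IC with hSC
  -- the intersection is nontrivial
  have hrank : 0 < Module.finrank ℂ ↥(SA ⊓ SC) := by
    have h1 := Submodule.finrank_sup_add_finrank_inf_eq SA SC
    have h2 : Module.finrank ℂ ↥(SA ⊔ SC) ≤ n := by
      have := Submodule.finrank_le (SA ⊔ SC)
      simpa [Module.finrank_fin_fun] using this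
    have h3 : Module.finrank ℂ ↥SA = (k : ℕ) + 1 := by
      rw [hSA, finrank_colSpan hA.eigenvectorUnitary.2, hcardA]
    have h4 : Module.finrank ℂ ↥SC = n - (k : ℕ) := by
      rw [hSC, finrank_colSpan hC.eigenvectorUnitary.2, hcardC]
    have := k.isLt
    omega
  obtain ⟨⟨x, hxmem⟩, hxne⟩ := Module.finrank_pos_iff_exists_ne_zero.mp hrank
  have hxne' : x ≠ 0 := by
    intro h
    exact hxne (Subtype.ext (by simpa using h))
  obtain ⟨hxA, hxC⟩ := Submodule.mem_inf.mp hxmem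
  obtain ⟨a, haI, hax⟩ := mem_colSpan hxA
  obtain ⟨b, hbI, hbx⟩ := mem_colSpan hxC
  -- real quantities
  set μ := hA.eigenvalues with hμ
  set ν := hC.eigenvalues with hν
  set Q1 := ∑ i, μ i * Complex.normSq (a i) with hQ1
  set Q2 := ∑ i, ν i * Complex.normSq (b i) with hQ2
  set N := ∑ i, Complex.normSq (a i) with hN
  set N' := ∑ i, Complex.normSq (b i) with hN'
  have hquadA : star x ⬝ᵥ (A *ᵥ x) = (Q1 : ℂ) := by rw [hax]; exact quad_form hA a
  have hquadC : star x ⬝ᵥ (C *ᵥ x) = (Q2 : ℂ) := by rw [hbx]; exact quad_form hC b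
  have hnormA : star x ⬝ᵥ x = (N : ℂ) := by rw [hax]; exact norm_form hA.eigenvectorUnitary.2 a
  have hnormC : star x ⬝ᵥ x = (N' : ℂ) := by rw [hbx]; exact norm_form hC.eigenvectorUnitary.2 b
  have hNN' : N = N' := by
    have := hnormA.symm.trans hnormC
    exact_mod_cast this
  have hNpos : 0 < N := by
    have hane : a ≠ 0 := by
      rintro rfl
      exact hxne' (by simp [hax])
    obtain ⟨i, hi⟩ := Function.ne_iff.mp hane
    have h0 : 0 < Complex.normSq (a i) := Complex.normSq_pos.mpr hi
    have hle : Complex.normSq (a i) ≤ N :=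
      Finset.single_le_sum (fun j _ => Complex.normSq_nonneg (a j)) (Finset.mem_univ i)
    linarith
  -- eigenvalue bounds on the index sets
  have hmonoA := Tuple.monotone_sort hA.eigenvalues
  have hmonoC := Tuple.monotone_sort hC.eigenvalues
  have hAbound : eigsDesc A k * N ≤ Q1 := by
    rw [hQ1, hN, Finset.mul_sum]
    refine Finset.sum_le_sum fun i _ => ?_
    by_cases hai : a i = 0
    · simp [hai]
    · have hiI : i ∈ IA := by
        by_contra hcon
        exact hai (haI i hcon)
      obtain ⟨m, hm, rfl⟩ := Finset.mem_image.mp hiI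
      have : μ (σ (Fin.rev k)) ≤ μ (σ m) := hmonoA (Finset.mem_Ici.mp hm)
      have heig : eigsDesc A k = μ (σ (Fin.rev k)) := by
        rw [eigsDesc, dif_pos hA]
      rw [heig]
      exact mul_le_mul_of_nonneg_right this (Complex.normSq_nonneg _)
  have hCbound : Q2 ≤ eigsDesc C k * N' := by
    rw [hQ2, hN', Finset.mul_sum]
    refine Finset.sum_le_sum fun i _ => ?_
    by_cases hbi : b i = 0
    · simp [hbi]
    · have hiI : i ∈ IC := by
        by_contra hcon
        exact hbi (hbI i hcon)
      obtain ⟨m, hm, rfl⟩ := Finset.mem_image.mp hiI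
      have : ν (τ m) ≤ ν (τ (Fin.rev k)) := hmonoC (Finset.mem_Iic.mp hm)
      have heig : eigsDesc C k = ν (τ (Fin.rev k)) := by
        rw [eigsDesc, dif_pos hC]
      rw [heig]
      exact mul_le_mul_of_nonneg_right this (Complex.normSq_nonneg _)
  -- PSD inequality
  have hPSDx := hPSD.dotProduct_mulVec_nonneg x
  have hexp : star x ⬝ᵥ (((d:ℂ) • C + (c:ℂ) • 1 - A) *ᵥ x)
      = ((d * Q2 + c * N - Q1 : ℝ) : ℂ) := by
    rw [Matrix.sub_mulVec, Matrix.add_mulVec, Matrix.smul_mulVec,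
      Matrix.smul_mulVec, Matrix.one_mulVec, dotProduct_sub, dotProduct_add,
      dotProduct_smul, dotProduct_smul, hquadA, hquadC, hnormC, ← hNN']
    simp only [smul_eq_mul]
    push_cast
    ring
  rw [hexp] at hPSDx
  have hreal : 0 ≤ d * Q2 + c * N - Q1 := by exact_mod_cast hPSDx
  have hfin : eigsDesc A k * N ≤ (d * eigsDesc C k + c) * N := by
    have h5 : d * Q2 ≤ d * (eigsDesc C k * N') := mul_le_mul_of_nonneg_left hCbound hd
    rw [← hNN'] at h5
    have h6 : d * (eigsDesc C k * N) + c * N = (d * eigsDesc C k + c) * N := by ring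
    linarith
  exact le_of_mul_le_mul_right (by linarith [hfin]) hNpos

lemma matFun_isHermitian {n : ℕ} (g : ℝ → ℝ) {M : Matrix (Fin n) (Fin n) ℂ}
    (hM : M.IsHermitian) : (matFun g M).IsHermitian := by
  rw [matFun, dif_pos hM, Matrix.star_eq_conjTranspose]
  exact Matrix.isHermitian_mul_mul_conjTranspose _
    (Matrix.isHermitian_diagonal_iff.mpr fun i => Complex.conj_ofReal _)

lemma conj_affine {n : ℕ} (W D1 D3 : Matrix (Fin n) (Fin n) ℂ) (d c : ℂ)
    (h2 : W * star W = 1) :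
    d • (W * D1 * star W) + c • 1 - W * D3 * star W
      = W * (d • D1 + c • 1 - D3) * star W := by
  rw [Matrix.mul_sub, Matrix.mul_add, Matrix.sub_mul, Matrix.add_mul]
  simp only [Matrix.mul_smul, Matrix.smul_mul, Matrix.mul_one, Matrix.one_mul,
    Matrix.mul_assoc, h2]

lemma matFun_tangent_psd {n : ℕ} {g : ℝ → ℝ} {M : Matrix (Fin n) (Fin n) ℂ}
    (hM : M.PosSemidef) {d c : ℝ}
    (htan : ∀ x ∈ Set.Ici (0:ℝ), g x ≤ d * x + c) :
    ((d:ℂ) • M + (c:ℂ) • 1 - matFun g M).PosSemidef := by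
  have hH := hM.1
  have h2 : (hH.eigenvectorUnitary : Matrix (Fin n) (Fin n) ℂ)
      * star (hH.eigenvectorUnitary : Matrix (Fin n) (Fin n) ℂ) = 1 :=
    Matrix.mem_unitaryGroup_iff.mp hH.eigenvectorUnitary.2
  have key : (d:ℂ) • M + (c:ℂ) • 1 - matFun g M =
      (hH.eigenvectorUnitary : Matrix (Fin n) (Fin n) ℂ)
        * Matrix.diagonal
            (fun i => ((d * hH.eigenvalues i + c - g (hH.eigenvalues i) : ℝ) : ℂ))
        * star (hH.eigenvectorUnitary : Matrix (Fin n) (Fin n) ℂ) := by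
    rw [matFun, dif_pos hH]
    rw [show (d:ℂ) • M = (d:ℂ) • ((hH.eigenvectorUnitary : Matrix (Fin n) (Fin n) ℂ)
        * Matrix.diagonal (RCLike.ofReal ∘ hH.eigenvalues)
        * star (hH.eigenvectorUnitary : Matrix (Fin n) (Fin n) ℂ)) from by
      conv_lhs => rw [hH.spectral_theorem]; simp only [Unitary.conjStarAlgAut_apply, Unitary.coe_star]]
    rw [conj_affine _ _ _ _ _ h2]
    congr 1
    congr 1
    ext i j
    rcases eq_or_ne i j with rfl | hij
    · simp [Matrix.one_apply_eq]
    · simp [Matrix.diagonal_apply_ne _ hij, Matrix.one_apply_ne hij]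
  rw [key, Matrix.star_eq_conjTranspose]
  refine Matrix.PosSemidef.mul_mul_conjTranspose_same ?_ _
  refine Matrix.posSemidef_diagonal_iff.mpr fun i => ?_
  have h3 : 0 ≤ d * hH.eigenvalues i + c - g (hH.eigenvalues i) :=
    sub_nonneg.2 (htan _ (hM.eigenvalues_nonneg i))
  exact_mod_cast h3

lemma psd_real_smul {n : ℕ} {B : Matrix (Fin n) (Fin n) ℂ} (hB : B.PosSemidef)
    {r : ℝ} (hr : 0 ≤ r) : (((r:ℝ) : ℂ) • B).PosSemidef := by
  refine Matrix.PosSemidef.of_dotProduct_mulVec_nonneg ?_ ?_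
  · show ((r:ℂ) • B)ᴴ = (r:ℂ) • B
    rw [Matrix.conjTranspose_smul, hB.1.eq, Complex.star_def, Complex.conj_ofReal]
  · intro x
    rw [Matrix.smul_mulVec, dotProduct_smul, smul_eq_mul]
    exact mul_nonneg (by exact_mod_cast hr) (hB.dotProduct_mulVec_nonneg x)

end Helpers

/-- Key step in the proof of Theorem 1: if `g` is non-negative, increasing and
concave on `[0,∞)` with `g 0 = 0`, `g 1 = 1`, and its one-sided (right)
derivative is everywhere at most `1`, then for PSD `B, C` with `‖B‖_∞ ≤ 1`,
`λ_k^↓(g(C+B) − B) ≤ g(λ_k^↓(C))` for every `k`. -/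
theorem eig_concave_shift {n : ℕ} (g : ℝ → ℝ)
    (hg0 : ∀ x ∈ Set.Ici (0 : ℝ), 0 ≤ g x)
    (hgmono : MonotoneOn g (Set.Ici (0 : ℝ)))
    (hgconc : ConcaveOn ℝ (Set.Ici (0 : ℝ)) g)
    (hg00 : g 0 = 0) (hg1 : g 1 = 1)
    (hg' : ∀ x ∈ Set.Ici (0 : ℝ), ∃ d ≤ (1 : ℝ),
      Filter.Tendsto (fun t => (g (x + t) - g x) / t) (nhdsWithin 0 (Set.Ioi 0)) (nhds d))
    (B C : Matrix (Fin n) (Fin n) ℂ) (hB : B.PosSemidef) (hC : C.PosSemidef)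
    (hBnorm : opNorm B ≤ 1) (k : Fin n) :
    eigsDesc (matFun g (C + B) - B) k ≤ g (eigsDesc C k) := by
  have hCB : (C + B).PosSemidef := hC.add hB
  have hx0 : eigsDesc C k ∈ Set.Ici (0:ℝ) := by
    rw [eigsDesc, dif_pos hC.1]
    exact hC.eigenvalues_nonneg _
  obtain ⟨d, hd1, htend⟩ := hg' _ hx0
  have hd0 : 0 ≤ d := by
    refine ge_of_tendsto htend ?_
    filter_upwards [self_mem_nhdsWithin] with t ht
    have ht0 : (0:ℝ) < t := ht
    have h1 : g (eigsDesc C k) ≤ g (eigsDesc C k + t) :=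
      hgmono hx0 (Set.mem_Ici.2 (by have := Set.mem_Ici.1 hx0; linarith)) (by linarith)
    exact div_nonneg (by linarith) ht0.le
  set x₀ := eigsDesc C k with hx₀def
  set c : ℝ := g x₀ - d * x₀ with hc
  have htan : ∀ x ∈ Set.Ici (0:ℝ), g x ≤ d * x + c := by
    intro x hx
    have := tangent_bound hgconc hx0 htend hx
    rw [hc]
    linarith
  have P1 := matFun_tangent_psd hCB htan
  have hHm : (matFun g (C + B) - B).IsHermitian := (matFun_isHermitian g hCB.1).sub hB.1
  have hmat : ((d:ℂ) • C + (c:ℂ) • 1 - (matFun g (C + B) - B))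
      = ((d:ℂ) • (C + B) + (c:ℂ) • 1 - matFun g (C + B)) + (((1 - d : ℝ) : ℂ)) • B := by
    ext i j
    simp only [Matrix.add_apply, Matrix.sub_apply, Matrix.smul_apply, smul_eq_mul]
    push_cast
    ring
  have P2 : ((d:ℂ) • C + (c:ℂ) • 1 - (matFun g (C + B) - B)).PosSemidef := by
    rw [hmat]
    exact P1.add (psd_real_smul hB (by linarith))
  have hkey := weyl_key hHm hC.1 hd0 P2 k
  rw [hc, ← hx₀def] at hkey
  linarith
end
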